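/- arXiv:2104.10808 — 2 statements merged into one kernel-verified Lean document; each statement's English description precedes it below -/
import Mathlib

section
/- Let F(x) = 2^{-r}(1+tanh x)^{r} on ℝ with r > 0 (Burr VII). Then F^{-1}(1-u) = (1/2) log r + (1/2) log(1/u) - ((1+r)/(4r))u + O(u²) as u → 0⁺. -/
open Real Filter Asymptotics Topology Finset

lemma logA {x : ℝ} (h : |x| ≤ 1/2) : |Real.log (1-x) + x + x^2/2| ≤ 2 * |x|^3 := by
  have h1 : |x| < 1 := by linarith [abs_nonneg x]
  have := Real.abs_log_sub_add_sum_range_le h1 2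
  have hsum : (∑ i ∈ range 2, x ^ (i + 1) / (i + 1)) = x + x^2/2 := by
    simp [Finset.sum_range_succ]; ring
  rw [hsum] at this
  have h2 : |x|^3 / (1 - |x|) ≤ 2 * |x|^3 := by
    rw [div_le_iff₀ (by linarith)]
    nlinarith [pow_nonneg (abs_nonneg x) 3]
  calc |Real.log (1-x) + x + x^2/2| = |(x + x^2/2) + Real.log (1-x)| := by ring_nf
    _ ≤ |x|^3/(1-|x|) := this
    _ ≤ 2*|x|^3 := h2

lemma expB {x : ℝ} (h : |x| ≤ 1) : |Real.exp x - (1 + x + x^2/2)| ≤ |x|^3 := by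
  have := Real.exp_bound h (n := 3) (by norm_num)
  have hsum : (∑ m ∈ range 3, x ^ m / m.factorial) = 1 + x + x^2/2 := by
    simp [Finset.sum_range_succ, Nat.factorial]
  rw [hsum] at this
  calc |Real.exp x - (1 + x + x^2/2)| ≤ |x|^3 * ((3:ℕ).succ / ((3:ℕ).factorial * 3)) := this
    _ ≤ |x|^3 := by
        have h39 : ((3:ℕ).succ / ((3:ℕ).factorial * 3) : ℝ) = 2/9 := by norm_num [Nat.factorial]
        rw [h39]; nlinarith [pow_nonneg (abs_nonneg x) 3]

lemma logC {t : ℝ} (h : |t| ≤ 1/2) : |Real.log (1+t) - t| ≤ 2 * t^2 := by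
  have h1 : |(-t)| < 1 := by rw [abs_neg]; linarith [abs_nonneg t]
  have := Real.abs_log_sub_add_sum_range_le h1 1
  have hsum : (∑ i ∈ range 1, (-t) ^ (i + 1) / (i + 1)) = -t := by simp
  rw [hsum] at this
  have he : (1 : ℝ) - -t = 1 + t := by ring
  rw [he, abs_neg] at this
  have h2 : |t|^2 / (1 - |t|) ≤ 2 * t^2 := by
    rw [div_le_iff₀ (by linarith), sq_abs]
    nlinarith [sq_nonneg t]
  calc |Real.log (1+t) - t| = |(-t) + Real.log (1+t)| := by ring_nf
    _ ≤ |t|^(1+1)/(1-|t|) := this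
    _ ≤ 2*t^2 := h2

lemma abs_sub_le' (a b : ℝ) : |a - b| ≤ |a| + |b| := by
  rw [sub_eq_add_neg]
  exact (abs_add_le a (-b)).trans (by rw [abs_neg])

lemma abs_sub_sub_le (a b c : ℝ) : |a - b - c| ≤ |a| + |b| + |c| := by
  have h1 := abs_sub_le' (a - b) c
  have h2 := abs_sub_le' a b
  linarith

lemma abs_add4 (a b c d : ℝ) : |a + b - c - d| ≤ |a| + |b| + |c| + |d| := by
  have h1 := abs_sub_sub_le (a+b) c d
  have h2 := abs_add_le a b
  linarith

set_option maxHeartbeats 1000000 in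
/-- Burr VII quantile expansion: with `F⁻¹(v) = artanh (2 v^{1/r} - 1)`
(where `artanh y = (1/2) log ((1+y)/(1-y))`),
`F⁻¹(1-u) = (1/2) log r + (1/2) log(1/u) - ((1+r)/(4r)) u + O(u²)` as `u → 0⁺`. -/
theorem burrVII_quantile_expansion (r : ℝ) (hr : 0 < r) :
    (fun u : ℝ =>
        (1 / 2) * Real.log ((1 + (2 * (1 - u) ^ (1 / r : ℝ) - 1))
            / (1 - (2 * (1 - u) ^ (1 / r : ℝ) - 1)))
          - ((1 / 2) * Real.log r + (1 / 2) * Real.log (1 / u) - ((1 + r) / (4 * r)) * u))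
      =O[𝓝[>] (0 : ℝ)] fun u => u ^ 2 := by
  obtain ⟨s, hsdef⟩ : ∃ s : ℝ, s = 1/r := ⟨_, rfl⟩
  have hs0 : (0:ℝ) < s := by rw [hsdef]; positivity
  obtain ⟨K, hKdef⟩ : ∃ K : ℝ, K = 2 + 3*s + 8*s^2 := ⟨_, rfl⟩
  have hK0 : (0:ℝ) ≤ K := by rw [hKdef]; positivity
  obtain ⟨M, hMdef⟩ : ∃ M : ℝ, M = (1+s)/2 + K := ⟨_, rfl⟩
  have hM0 : (0:ℝ) ≤ M := by rw [hMdef]; linarith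
  obtain ⟨C, hCdef⟩ : ∃ C : ℝ, C = s/4 + s + K/2 + M^2 := ⟨_, rfl⟩
  have hsM : (0:ℝ) < s + M + 1 := by linarith
  obtain ⟨δ, hδdef⟩ : ∃ δ : ℝ, δ = min (1/2) (1/(2*(s+M+1))) := ⟨_, rfl⟩
  have hδ0 : 0 < δ := by rw [hδdef]; exact lt_min (by norm_num) (by positivity)
  rw [isBigO_iff]
  refine ⟨C, ?_⟩
  filter_upwards [Ioo_mem_nhdsGT_of_mem (Set.mem_Ico.mpr ⟨le_rfl, hδ0⟩)] with u hu
  obtain ⟨hu0, huδ⟩ := hu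
  have hu2 : u ≤ 1/2 := le_trans huδ.le (hδdef ▸ min_le_left _ _)
  have hu1 : u ≤ 1 := by linarith
  have huM : u * (2*(s+M+1)) < 1 := by
    have h := lt_of_lt_of_le huδ (hδdef ▸ min_le_right (1/2) (1/(2*(s+M+1))))
    rw [lt_div_iff₀ (by positivity)] at h
    linarith
  have h1u : 0 < 1 - u := by linarith
  obtain ⟨L, hLdef⟩ : ∃ L : ℝ, L = Real.log (1 - u) := ⟨_, rfl⟩
  have habsu : |u| = u := abs_of_pos hu0
  have hA : |L + u + u^2/2| ≤ 2*u^3 := by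
    have h := logA (x := u) (by rw [habsu]; exact hu2)
    rw [habsu] at h
    rw [hLdef]
    exact h
  have hA' := abs_le.mp hA
  have hu3 : 0 < u^3 := by positivity
  have hq1 : 0 ≤ u^2*(1/2 - u) := mul_nonneg (sq_nonneg u) (by linarith)
  have hq2 : 0 ≤ u*(1/2 - u) := mul_nonneg hu0.le (by linarith)
  have hLb : |L| ≤ 2*u := by
    rw [abs_le]; constructor <;> linarith
  have hL' := abs_le.mp hLb
  have hx1 : |s*L| ≤ 2*s*u := by
    rw [abs_mul, abs_of_pos hs0]
    calc s * |L| ≤ s * (2*u) := mul_le_mul_of_nonneg_left hLb hs0.le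
      _ = 2*s*u := by ring
  have hsu1 : 2*s*u ≤ 1 := by
    have hb : (0:ℝ) ≤ u*(2*(M+1)) := by positivity
    linarith
  have hx1' : |s*L| ≤ 1 := le_trans hx1 hsu1
  obtain ⟨x, hxdef⟩ : ∃ x : ℝ, x = s*L := ⟨_, rfl⟩
  obtain ⟨v, hvdef⟩ : ∃ v : ℝ, v = Real.exp x := ⟨_, rfl⟩
  have hv0 : 0 < v := hvdef ▸ Real.exp_pos x
  have hvu : (1-u) ^ (1/r : ℝ) = v := by
    rw [hvdef, hxdef, hLdef, hsdef, Real.rpow_def_of_pos h1u]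
    exact congrArg Real.exp (mul_comm _ _)
  have he2 : |v - (1 + x + x^2/2)| ≤ 8*s^3*u^3 := by
    rw [hvdef]
    refine le_trans (expB (hxdef ▸ hx1')) ?_
    calc |x|^3 ≤ (2*s*u)^3 := by
          apply pow_le_pow_left₀ (abs_nonneg _) (hxdef ▸ hx1)
      _ = 8*s^3*u^3 := by ring
  obtain ⟨w, hwdef⟩ : ∃ w : ℝ, w = 1 - v := ⟨_, rfl⟩
  have hLpu : |L + u| ≤ 3/2*u^2 := by
    have e : L + u = (L + u + u^2/2) - u^2/2 := by ring
    rw [e]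
    refine le_trans (abs_sub_le' _ _) ?_
    rw [abs_of_nonneg (by positivity : (0:ℝ) ≤ u^2/2)]
    linarith
  have hLmu : |L - u| ≤ 3*u := by
    refine le_trans (abs_sub_le' _ _) ?_
    rw [habsu]; linarith
  have hLsq : |u^2 - L^2| ≤ 5*u^3 := by
    rw [show u^2 - L^2 = -((L+u)*(L-u)) by ring, abs_neg, abs_mul]
    calc |L+u| * |L-u| ≤ (3/2*u^2)*(3*u) :=
          mul_le_mul hLpu hLmu (abs_nonneg _) (by positivity)
      _ ≤ 5*u^3 := by linarith
  have he4 : |w - s*u - s*(1-s)/2*u^2| ≤ s*K*u^3 := by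
    have hid : w - s*u - s*(1-s)/2*u^2
        = (s^2/2)*(u^2 - L^2) - s*(L + u + u^2/2) - (v - (1 + x + x^2/2)) := by
      rw [hwdef, hxdef]; ring
    rw [hid]
    refine le_trans (abs_sub_sub_le _ _ _) ?_
    rw [abs_mul, abs_mul, abs_of_pos (by positivity : (0:ℝ) < s^2/2), abs_of_pos hs0]
    have h1 : s^2/2 * |u^2 - L^2| ≤ s^2/2 * (5*u^3) :=
      mul_le_mul_of_nonneg_left hLsq (by positivity)
    have h2 : s * |L + u + u^2/2| ≤ s * (2*u^3) :=
      mul_le_mul_of_nonneg_left hA hs0.le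
    have h3 : (0:ℝ) ≤ s^2*u^3 := by positivity
    rw [hKdef]; linarith [h1, h2, he2, h3]
  have hsu0 : (0:ℝ) < s*u := by positivity
  obtain ⟨hh, hhdef⟩ : ∃ hh : ℝ, hh = w/(s*u) := ⟨_, rfl⟩
  obtain ⟨t, htdef⟩ : ∃ t : ℝ, t = hh - 1 := ⟨_, rfl⟩
  have hht : hh = 1 + t := by rw [htdef]; ring
  have he5 : |t - (1-s)/2*u| ≤ K*u^2 := by
    have hid : t - (1-s)/2*u = (w - s*u - s*(1-s)/2*u^2)/(s*u) := by
      rw [htdef, hhdef]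
      field_simp
    rw [hid, abs_div, abs_of_pos hsu0, div_le_iff₀ hsu0]
    calc |w - s*u - s*(1-s)/2*u^2| ≤ s*K*u^3 := he4
      _ = K*u^2*(s*u) := by ring
  have he5' := abs_le.mp he5
  have hMu_eq : M*u = (1+s)/2*u + K*u := by rw [hMdef]; ring
  have htb : |t| ≤ M*u := by
    have hKu : (0:ℝ) ≤ K*(u*(1-u)) := mul_nonneg hK0 (mul_nonneg hu0.le (by linarith))
    have hsu : (0:ℝ) < s*u := hsu0
    rw [abs_le]; constructor <;> linarith [he5'.1, he5'.2, hKu, hsu, hMu_eq]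
  have hMu2 : M*u ≤ 1/2 := by linarith [huM, mul_pos hs0 hu0, hu0]
  have ht12 : |t| ≤ 1/2 := le_trans htb hMu2
  have ht' := abs_le.mp ht12
  have hh0 : 0 < hh := by rw [hht]; linarith
  have hwh : w = s*u*hh := by
    rw [hhdef]; field_simp
  have hw0 : 0 < w := by rw [hwh]; exact mul_pos hsu0 hh0
  have htb' := abs_le.mp htb
  have he6 : |Real.log (1+t) - t| ≤ 2*(M*u)^2 := by
    refine le_trans (logC ht12) ?_
    have h := sq_le_sq' htb'.1 htb'.2
    linarith
  -- rewrite the goal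
  simp only [Real.norm_eq_abs]
  rw [hvu]
  have harg : (1 + (2*v - 1))/(1 - (2*v - 1)) = v / w := by
    rw [hwdef, show (1 + (2*v-1)) = 2*v by ring, show (1 - (2*v-1)) = 2*(1-v) by ring,
      mul_div_mul_left _ _ (two_ne_zero)]
  rw [harg]
  have hlogdiv : Real.log (v/w) = x - (Real.log s + Real.log u + Real.log hh) := by
    rw [Real.log_div hv0.ne' hw0.ne', hvdef, Real.log_exp, hwh,
      Real.log_mul hsu0.ne' hh0.ne', Real.log_mul hs0.ne' hu0.ne']
  have hlogs : Real.log s = -Real.log r := by rw [hsdef, one_div, Real.log_inv]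
  have hlogu : Real.log (1/u) = -Real.log u := by rw [one_div, Real.log_inv]
  have hcoef : (1+r)/(4*r) = (s+1)/4 := by
    rw [hsdef, show (1/r + 1 : ℝ) = (1+r)/r by field_simp, div_div, mul_comm r 4]
  have hfinal : 1/2 * Real.log (v/w) - (1/2*Real.log r + 1/2*Real.log (1/u) - (1+r)/(4*r)*u)
      = -s*u^2/4 + (s/2)*(L + u + u^2/2) - (t - (1-s)/2*u)/2
        - (Real.log (1+t) - t)/2 := by
    rw [hlogdiv, hlogs, hlogu, hcoef, hht, hxdef]
    ring
  rw [hfinal]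
  refine le_trans (abs_add4 (-s*u^2/4) ((s/2)*(L + u + u^2/2)) ((t - (1-s)/2*u)/2)
    ((Real.log (1+t) - t)/2)) ?_
  have hb1 : |(-s*u^2/4)| = s*u^2/4 := by
    rw [show (-s*u^2/4) = -(s*u^2/4) by ring, abs_neg, abs_of_nonneg (by positivity)]
  have hb2 : |(s/2)*(L + u + u^2/2)| ≤ s*u^3 := by
    rw [abs_mul, abs_of_pos (by positivity : (0:ℝ) < s/2)]
    calc s/2 * |L + u + u^2/2| ≤ s/2 * (2*u^3) := mul_le_mul_of_nonneg_left hA (by positivity)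
      _ = s*u^3 := by ring
  have hb3 : |(t - (1-s)/2*u)/2| ≤ K*u^2/2 := by
    rw [abs_div, abs_two]
    linarith
  have hb4 : |(Real.log (1+t) - t)/2| ≤ (M*u)^2 := by
    rw [abs_div, abs_two]
    linarith
  have hnorm : |u^2| = u^2 := abs_of_pos (by positivity)
  rw [hnorm, hb1, hCdef]
  have hq3 : (0:ℝ) ≤ s*(u^2*(1-u)) := mul_nonneg hs0.le (mul_nonneg (sq_nonneg u) (by linarith))
  linarith [hb2, hb3, hb4, hq3]
end

section
/- For the Burr V cdf F (parameters k, r > 0), with s(u) = (log(kr/u))^{-2}, for every λ > 0 one has lim_{u→0⁺} (F^{-1}(1-λu) - F^{-1}(1-u))/s(u) = -log λ; hence F belongs to the Gumbel max-domain of attraction. -/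
open Real Filter Asymptotics Topology

/-- Burr V quantile-type auxiliary function. -/
noncomputable def bgAux (k r : ℝ) : ℝ → ℝ :=
  fun u => Real.log (k / ((1 - u) ^ (-1 / r : ℝ) - 1))

/-- The normalizing log function. -/
noncomputable def bLAux (k r : ℝ) : ℝ → ℝ :=
  fun u => Real.log (k * r / u)

lemma arctan_le_self_aux {x : ℝ} (hx : 0 ≤ x) : Real.arctan x ≤ x := by
  have mono : Monotone (fun t : ℝ => t - Real.arctan t) := by
    have hd : ∀ t : ℝ, HasDerivAt (fun t : ℝ => t - Real.arctan t) (1 - 1 / (1 + t ^ 2)) t :=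
      fun t => (hasDerivAt_id t).sub (Real.hasDerivAt_arctan t)
    refine monotone_of_deriv_nonneg (fun t => (hd t).differentiableAt) (fun t => ?_)
    rw [(hd t).deriv]
    have h1 : (1:ℝ) / (1 + t ^ 2) ≤ 1 := by
      rw [div_le_one (by positivity)]; nlinarith [sq_nonneg t]
    linarith
  have := mono hx
  simp only [Real.arctan_zero, sub_zero] at this
  linarith

lemma self_sub_cube_le_arctan_aux {x : ℝ} (hx : 0 ≤ x) : x - x ^ 3 ≤ Real.arctan x := by
  have mono : Monotone (fun t : ℝ => Real.arctan t - t + t ^ 3) := by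
    have hd : ∀ t : ℝ, HasDerivAt (fun t : ℝ => Real.arctan t - t + t ^ 3)
        (1 / (1 + t ^ 2) - 1 + 3 * t ^ 2) t := by
      intro t
      have h1 := ((Real.hasDerivAt_arctan t).sub (hasDerivAt_id t)).add (hasDerivAt_pow 3 t)
      exact h1.congr_deriv (by norm_num)
    refine monotone_of_deriv_nonneg (fun t => (hd t).differentiableAt) (fun t => ?_)
    rw [(hd t).deriv]
    have h1 : (1:ℝ) - t ^ 2 ≤ 1 / (1 + t ^ 2) := by
      rw [le_div_iff₀ (by positivity)]; nlinarith [sq_nonneg (t^2)]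
    nlinarith [sq_nonneg t]
  have := mono hx
  simp only [Real.arctan_zero] at this
  nlinarith [this]

lemma abs_arctan_sub_le_aux {x : ℝ} (hx : 0 ≤ x) : |Real.arctan x - x| ≤ x ^ 3 := by
  have h1 := arctan_le_self_aux hx
  have h2 := self_sub_cube_le_arctan_aux hx
  rw [abs_le]
  constructor <;> nlinarith [pow_nonneg hx 3]

/-- Burr V is in the Gumbel max-domain of attraction: with
`F⁻¹(v) = arctan (log (k/(v^{-1/r}-1)))` and `s(u) = (log(kr/u))⁻²`, for every `λ > 0`,
`(F⁻¹(1-λu) - F⁻¹(1-u))/s(u) → -log λ` as `u → 0⁺`. -/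
theorem burrV_gumbel_domain (k r : ℝ) (hk : 0 < k) (hr : 0 < r)
    (lam : ℝ) (hlam : 0 < lam) :
    Filter.Tendsto
      (fun u : ℝ =>
        (Real.arctan (Real.log (k / ((1 - lam * u) ^ (-1 / r : ℝ) - 1)))
            - Real.arctan (Real.log (k / ((1 - u) ^ (-1 / r : ℝ) - 1))))
          / (Real.log (k * r / u)) ^ (-2 : ℝ))
      (𝓝[>] (0 : ℝ)) (𝓝 (-Real.log lam)) := by
  set l : Filter ℝ := 𝓝[>] (0:ℝ) with hl
  set g : ℝ → ℝ := bgAux k r with hgdef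
  set L : ℝ → ℝ := bLAux k r with hLdef
  have hgval : ∀ u, g u = Real.log (k / ((1 - u) ^ (-1 / r : ℝ) - 1)) := fun u => rfl
  have hLval : ∀ u, L u = Real.log (k * r / u) := fun u => rfl
  show Tendsto (fun u : ℝ => (Real.arctan (g (lam * u)) - Real.arctan (g u)) / (L u) ^ (-2:ℝ))
      l (𝓝 (-Real.log lam))
  -- the self-map u ↦ lam * u
  have hmap : Tendsto (fun u : ℝ => lam * u) l l := by
    apply tendsto_nhdsWithin_of_tendsto_nhds_of_eventually_within
    · have : Tendsto (fun u : ℝ => lam * u) (𝓝 0) (𝓝 (lam * 0)) :=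
        (continuous_const.mul continuous_id).tendsto 0
      simpa using this.mono_left nhdsWithin_le_nhds
    · filter_upwards [self_mem_nhdsWithin] with u hu
      exact mul_pos hlam hu
  have hIoo : ∀ᶠ u in l, u ∈ Set.Ioo (0:ℝ) 1 := Ioo_mem_nhdsGT_of_mem ⟨le_refl 0, one_pos⟩
  have hIooLam : ∀ᶠ u in l, lam * u ∈ Set.Ioo (0:ℝ) 1 := hmap.eventually hIoo
  -- positivity of the rpow difference
  have hD : ∀ u ∈ Set.Ioo (0:ℝ) 1, 0 < (1 - u) ^ (-1 / r : ℝ) - 1 := by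
    intro u hu
    have h1 : (1:ℝ) < (1 - u) ^ (-1 / r : ℝ) := by
      rw [Real.one_lt_rpow_iff_of_pos (by linarith [hu.2])]
      right
      constructor
      · linarith [hu.1]
      · rw [neg_div]; exact neg_neg_iff_pos.mpr (by positivity)
    linarith
  -- L tends to atTop
  have hLtop : Tendsto L l atTop := by
    have h1 : Tendsto (fun u : ℝ => (k * r) * u⁻¹) l atTop :=
      tendsto_inv_nhdsGT_zero.const_mul_atTop (mul_pos hk hr)
    have h2 : Tendsto (fun u : ℝ => k * r / u) l atTop :=
      h1.congr (fun u => (div_eq_mul_inv _ _).symm)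
    exact Real.tendsto_log_atTop.comp h2
  -- slope limit for the rpow map
  have hslope : Tendsto (fun u : ℝ => ((1 - u) ^ (-1 / r : ℝ) - 1) / u) l (𝓝 (1 / r)) := by
    have hinner : HasDerivAt (fun u : ℝ => 1 - u) (-1) 0 := by
      simpa using (hasDerivAt_id (0:ℝ)).const_sub 1
    have houter : HasDerivAt (fun x : ℝ => x ^ (-1 / r : ℝ))
        ((-1 / r) * (1:ℝ) ^ ((-1 / r : ℝ) - 1)) ((fun u : ℝ => 1 - u) 0) := by
      simpa using Real.hasDerivAt_rpow_const (p := (-1 / r : ℝ)) (x := (1:ℝ)) (Or.inl one_ne_zero)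
    have hcomp : HasDerivAt (fun u : ℝ => (1 - u) ^ (-1 / r : ℝ)) (1 / r) 0 := by
      have := houter.comp 0 hinner
      refine this.congr_deriv ?_
      rw [Real.one_rpow]
      ring
    have hs := hasDerivAt_iff_tendsto_slope.mp hcomp
    have hsub : l ≤ 𝓝[≠] (0:ℝ) :=
      nhdsWithin_mono 0 (fun x hx => ne_of_gt hx)
    have hs2 := hs.mono_left hsub
    apply hs2.congr
    intro u
    simp [slope_def_field, Real.one_rpow]
  -- ratio u / (r * D u) → 1
  have hratio : Tendsto (fun u : ℝ => u / (r * ((1 - u) ^ (-1 / r : ℝ) - 1))) l (𝓝 1) := by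
    have h1 : Tendsto (fun u : ℝ => r * (((1 - u) ^ (-1 / r : ℝ) - 1) / u)) l (𝓝 (r * (1/r))) :=
      tendsto_const_nhds.mul hslope
    have h2 := h1.inv₀ (by field_simp; norm_num)
    have h3 : (r * (1/r))⁻¹ = 1 := by field_simp
    rw [h3] at h2
    apply h2.congr
    intro u
    rw [← mul_div_assoc, inv_div]
  -- g - L → 0
  have hgL : Tendsto (fun u => g u - L u) l (𝓝 0) := by
    have h1 : Tendsto (fun u : ℝ => Real.log (u / (r * ((1 - u) ^ (-1 / r : ℝ) - 1)))) l
        (𝓝 (Real.log 1)) :=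
      (Real.continuousAt_log one_ne_zero).tendsto.comp hratio
    rw [Real.log_one] at h1
    apply h1.congr'
    filter_upwards [hIoo] with u hu
    have hDu := hD u hu
    have hu0 := hu.1
    have hne1 : k / ((1 - u) ^ (-1 / r : ℝ) - 1) ≠ 0 := (div_pos hk hDu).ne'
    have hne2 : k * r / u ≠ 0 := (div_pos (mul_pos hk hr) hu0).ne'
    rw [hgval, hLval, ← Real.log_div hne1 hne2]
    congr 1
    field_simp
  have hgLlam : Tendsto (fun u => g (lam * u) - L (lam * u)) l (𝓝 0) := hgL.comp hmap
  -- L (lam * u) = L u - log lam eventually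
  have hLlam : ∀ᶠ u in l, L (lam * u) = L u - Real.log lam := by
    filter_upwards [self_mem_nhdsWithin] with u hu
    have hu0 : (0:ℝ) < u := hu
    rw [hLval, hLval, ← Real.log_div (div_pos (mul_pos hk hr) hu0).ne' hlam.ne']
    congr 1
    field_simp
  -- g → atTop
  have hgtop : Tendsto g l atTop := by
    have := hgL.add_atTop hLtop
    apply this.congr
    intro u; ring
  have hgtoplam : Tendsto (fun u => g (lam * u)) l atTop := hgtop.comp hmap
  have hgpos : ∀ᶠ u in l, 1 ≤ g u := hgtop.eventually_ge_atTop 1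
  have hgposlam : ∀ᶠ u in l, 1 ≤ g (lam * u) := hgtoplam.eventually_ge_atTop 1
  have hLpos : ∀ᶠ u in l, 1 ≤ L u := hLtop.eventually_ge_atTop 1
  have hinvL : Tendsto (fun u => (L u)⁻¹) l (𝓝 0) := tendsto_inv_atTop_zero.comp hLtop
  have hinvg : Tendsto (fun u => (g u)⁻¹) l (𝓝 0) := tendsto_inv_atTop_zero.comp hgtop
  have hinvglam : Tendsto (fun u => (g (lam * u))⁻¹) l (𝓝 0) :=
    tendsto_inv_atTop_zero.comp hgtoplam
  -- L/g → 1
  have hLg : Tendsto (fun u => L u / g u) l (𝓝 1) := by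
    have h1 : Tendsto (fun u => (g u - L u) * (L u)⁻¹ + 1) l (𝓝 (0 * 0 + 1)) :=
      (hgL.mul hinvL).add tendsto_const_nhds
    have h2 : Tendsto (fun u => g u / L u) l (𝓝 1) := by
      rw [show (0:ℝ) * 0 + 1 = 1 from by norm_num] at h1
      apply h1.congr'
      filter_upwards [hLpos] with u hLu
      have hL0 : L u ≠ 0 := by linarith
      field_simp
      ring
    have h3 := h2.inv₀ one_ne_zero
    simp only [inv_one] at h3
    apply h3.congr
    intro u; rw [inv_div]
  -- g(lam u) - L u → -log lam
  have hdlam : Tendsto (fun u => g (lam * u) - L u) l (𝓝 (-Real.log lam)) := by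
    have h1 : Tendsto (fun u => L (lam * u) - L u) l (𝓝 (-Real.log lam)) := by
      apply tendsto_const_nhds.congr'
      filter_upwards [hLlam] with u hu
      rw [hu]; ring
    have h2 := hgLlam.add h1
    rw [zero_add] at h2
    apply h2.congr
    intro u; ring
  -- g(lam u) - g u → -log lam
  have hdiff : Tendsto (fun u => g (lam * u) - g u) l (𝓝 (-Real.log lam)) := by
    have := hdlam.sub hgL
    rw [sub_zero] at this
    apply this.congr
    intro u; ring
  -- L / g(lam u) → 1
  have hLglam : Tendsto (fun u => L u / g (lam * u)) l (𝓝 1) := by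
    have h1 : Tendsto (fun u => (g (lam * u) - L u) * (L u)⁻¹ + 1) l
        (𝓝 ((-Real.log lam) * 0 + 1)) := (hdlam.mul hinvL).add tendsto_const_nhds
    have h2 : Tendsto (fun u => g (lam * u) / L u) l (𝓝 1) := by
      rw [show -Real.log lam * 0 + 1 = 1 from by ring] at h1
      apply h1.congr'
      filter_upwards [hLpos] with u hLu
      have hL0 : L u ≠ 0 := by linarith
      field_simp
      ring
    have h3 := h2.inv₀ one_ne_zero
    simp only [inv_one] at h3
    apply h3.congr
    intro u; rw [inv_div]
  -- main term T1
  have hT1 : Tendsto (fun u => (g (lam * u) - g u) * (L u / g u) * (L u / g (lam * u))) l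
      (𝓝 (-Real.log lam)) := by
    have := (hdiff.mul hLg).mul hLglam
    simpa using this
  -- error terms T2, T3 via squeeze
  have hT2 : Tendsto (fun u => (Real.arctan (g u)⁻¹ - (g u)⁻¹) * (L u) ^ 2) l (𝓝 0) := by
    apply squeeze_zero_norm' (a := fun u => (L u / g u) ^ 2 * (g u)⁻¹)
    · filter_upwards [hgpos, hLpos] with u hgu hLu
      have hgu0 : (0:ℝ) < g u := by linarith
      have hinv : (0:ℝ) ≤ (g u)⁻¹ := by positivity
      have hb := abs_arctan_sub_le_aux hinv
      rw [norm_mul, Real.norm_eq_abs, Real.norm_eq_abs, abs_of_nonneg (by positivity : (0:ℝ) ≤ (L u)^2)]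
      calc |Real.arctan (g u)⁻¹ - (g u)⁻¹| * (L u) ^ 2
          ≤ ((g u)⁻¹) ^ 3 * (L u) ^ 2 := by
            apply mul_le_mul_of_nonneg_right hb (by positivity)
        _ = (L u / g u) ^ 2 * (g u)⁻¹ := by
            rw [div_eq_mul_inv]; ring
    · have := ((hLg.pow 2).mul hinvg)
      simpa using this
  have hT3 : Tendsto (fun u => (Real.arctan (g (lam * u))⁻¹ - (g (lam * u))⁻¹) * (L u) ^ 2) l
      (𝓝 0) := by
    apply squeeze_zero_norm' (a := fun u => (L u / g (lam * u)) ^ 2 * (g (lam * u))⁻¹)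
    · filter_upwards [hgposlam, hLpos] with u hgu hLu
      have hgu0 : (0:ℝ) < g (lam * u) := by linarith
      have hinv : (0:ℝ) ≤ (g (lam * u))⁻¹ := by positivity
      have hb := abs_arctan_sub_le_aux hinv
      rw [norm_mul, Real.norm_eq_abs, Real.norm_eq_abs,
        abs_of_nonneg (by positivity : (0:ℝ) ≤ (L u)^2)]
      calc |Real.arctan (g (lam * u))⁻¹ - (g (lam * u))⁻¹| * (L u) ^ 2
          ≤ ((g (lam * u))⁻¹) ^ 3 * (L u) ^ 2 := by
            apply mul_le_mul_of_nonneg_right hb (by positivity)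
        _ = (L u / g (lam * u)) ^ 2 * (g (lam * u))⁻¹ := by
            rw [div_eq_mul_inv]; ring
    · have := ((hLglam.pow 2).mul hinvglam)
      simpa using this
  -- combine
  have hsum : Tendsto (fun u =>
      (g (lam * u) - g u) * (L u / g u) * (L u / g (lam * u))
        + (Real.arctan (g u)⁻¹ - (g u)⁻¹) * (L u) ^ 2
        - (Real.arctan (g (lam * u))⁻¹ - (g (lam * u))⁻¹) * (L u) ^ 2) l
      (𝓝 (-Real.log lam)) := by
    have := (hT1.add hT2).sub hT3
    simpa using this
  apply hsum.congr'
  filter_upwards [hgpos, hgposlam, hLpos] with u hgu hglamu hLu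
  have hgu0 : (0:ℝ) < g u := by linarith
  have hglam0 : (0:ℝ) < g (lam * u) := by linarith
  have hLu0 : (0:ℝ) < L u := by linarith
  -- rewrite the rpow
  have hrpow : (L u) ^ (-2:ℝ) = ((L u) ^ 2)⁻¹ := by
    rw [show ((-2:ℝ)) = -(2:ℝ) by norm_num, Real.rpow_neg hLu0.le, Real.rpow_two]
  have e1 : Real.arctan (g (lam * u)) = π / 2 - Real.arctan (g (lam * u))⁻¹ := by
    rw [Real.arctan_inv_of_pos hglam0]; ring
  have e2 : Real.arctan (g u) = π / 2 - Real.arctan (g u)⁻¹ := by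
    rw [Real.arctan_inv_of_pos hgu0]; ring
  rw [hrpow, div_inv_eq_mul, e1, e2]
  field_simp [hgu0.ne', hglam0.ne']
  ring
end
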